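/- Under the assumptions of the block-decoupling construction (ξ solving G + L₁ conj(ξ) − ξ L₂ − ξ Gᵀ conj(ξ) = 0), the lower-right block of Uᴴ M conj(U) equals (1+ξᴴξ)^{-1/2}(L₂ + ξᴴG + Gᵀ conj(ξ) + ξᴴ L₁ conj(ξ))(1+ξᵀ conj(ξ))^{-1/2}, and this also equals (1+ξᴴξ)^{1/2}(L₂ + Gᵀ conj(ξ))(1+ξᵀ conj(ξ))^{-1/2}. -/

import Mathlib

open Matrix ComplexOrder

/-- The old Mathlib `Matrix.PosSemidef.sqrt` (removed upstream), restated with its old definition. -/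
noncomputable def Matrix.PosSemidef.sqrt {n : Type*} [Fintype n] [DecidableEq n]
    {𝕜 : Type*} [RCLike 𝕜] {A : Matrix n n 𝕜} (hA : A.PosSemidef) : Matrix n n 𝕜 :=
  hA.1.eigenvectorUnitary.1 * diagonal ((↑) ∘ (√·) ∘ hA.1.eigenvalues) *
  (star hA.1.eigenvectorUnitary : Matrix n n 𝕜)

/-- The positive semidefinite square root of `1 + ξ * ξᴴ`. -/
noncomputable def sqrtOnePlusSelfMulConjTranspose {n₁ n₂ : ℕ}
    (ξ : Matrix (Fin n₁) (Fin n₂) ℂ) : Matrix (Fin n₁) (Fin n₁) ℂ :=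
  Matrix.PosSemidef.sqrt (Matrix.PosSemidef.add Matrix.PosSemidef.one
    (Matrix.posSemidef_self_mul_conjTranspose ξ))

/-- The positive semidefinite square root of `1 + ξᴴ * ξ`. -/
noncomputable def sqrtOnePlusConjTransposeMulSelf {n₁ n₂ : ℕ}
    (ξ : Matrix (Fin n₁) (Fin n₂) ℂ) : Matrix (Fin n₂) (Fin n₂) ℂ :=
  Matrix.PosSemidef.sqrt (Matrix.PosSemidef.add Matrix.PosSemidef.one
    (Matrix.posSemidef_conjTranspose_mul_self ξ))

/-- The standard unitary block matrix built from `ξ`. -/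
noncomputable def blockUnitary {n₁ n₂ : ℕ} (ξ : Matrix (Fin n₁) (Fin n₂) ℂ) :
    Matrix (Fin n₁ ⊕ Fin n₂) (Fin n₁ ⊕ Fin n₂) ℂ :=
  Matrix.fromBlocks
    (sqrtOnePlusSelfMulConjTranspose ξ)⁻¹ (ξ * (sqrtOnePlusConjTransposeMulSelf ξ)⁻¹)
    (-(ξᴴ * (sqrtOnePlusSelfMulConjTranspose ξ)⁻¹)) (sqrtOnePlusConjTransposeMulSelf ξ)⁻¹

lemma psdSqrt_conjTranspose {n : Type*} [Fintype n] [DecidableEq n]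
    {𝕜 : Type*} [RCLike 𝕜] {A : Matrix n n 𝕜} (hA : A.PosSemidef) :
    (hA.sqrt)ᴴ = hA.sqrt := by
  unfold Matrix.PosSemidef.sqrt
  have hD : (diagonal ((↑) ∘ (√·) ∘ hA.1.eigenvalues) : Matrix n n 𝕜)ᴴ
      = diagonal ((↑) ∘ (√·) ∘ hA.1.eigenvalues) := by
    rw [Matrix.diagonal_conjTranspose]
    congr 1
    funext i
    simp
  rw [Matrix.conjTranspose_mul, Matrix.conjTranspose_mul, hD,
    Matrix.star_eq_conjTranspose, Matrix.conjTranspose_conjTranspose, Matrix.mul_assoc]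

lemma psdSqrt_mul_self {n : Type*} [Fintype n] [DecidableEq n]
    {𝕜 : Type*} [RCLike 𝕜] {A : Matrix n n 𝕜} (hA : A.PosSemidef) :
    hA.sqrt * hA.sqrt = A := by
  unfold Matrix.PosSemidef.sqrt
  set U := hA.1.eigenvectorUnitary
  have hU : (star U : Matrix n n 𝕜) * (U : Matrix n n 𝕜) = 1 := Unitary.coe_star_mul_self U
  calc (U : Matrix n n 𝕜) * diagonal ((↑) ∘ (√·) ∘ hA.1.eigenvalues) * (star U : Matrix n n 𝕜)
        * ((U : Matrix n n 𝕜) * diagonal ((↑) ∘ (√·) ∘ hA.1.eigenvalues) * (star U : Matrix n n 𝕜))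
        = (U : Matrix n n 𝕜) * (diagonal ((↑) ∘ (√·) ∘ hA.1.eigenvalues)
          * ((star U : Matrix n n 𝕜) * (U : Matrix n n 𝕜))
          * diagonal ((↑) ∘ (√·) ∘ hA.1.eigenvalues)) * (star U : Matrix n n 𝕜) := by
          simp only [Matrix.mul_assoc]
    _ = (U : Matrix n n 𝕜) * diagonal (RCLike.ofReal ∘ hA.1.eigenvalues)
          * (star U : Matrix n n 𝕜) := by
          rw [hU, Matrix.mul_one, Matrix.diagonal_mul_diagonal]
          congr 3
          funext i
          simp only [Function.comp_apply]
          rw [← RCLike.ofReal_mul, Real.mul_self_sqrt (hA.eigenvalues_nonneg i)]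
    _ = A := by
          conv_rhs => rw [hA.1.spectral_theorem]
          rfl

lemma sqrt2_hermitian {n₁ n₂ : ℕ} (ξ : Matrix (Fin n₁) (Fin n₂) ℂ) :
    (sqrtOnePlusConjTransposeMulSelf ξ)ᴴ = sqrtOnePlusConjTransposeMulSelf ξ :=
  psdSqrt_conjTranspose _

lemma sqrt1_hermitian {n₁ n₂ : ℕ} (ξ : Matrix (Fin n₁) (Fin n₂) ℂ) :
    (sqrtOnePlusSelfMulConjTranspose ξ)ᴴ = sqrtOnePlusSelfMulConjTranspose ξ :=
  psdSqrt_conjTranspose _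

lemma sqrt2_mul_self {n₁ n₂ : ℕ} (ξ : Matrix (Fin n₁) (Fin n₂) ℂ) :
    sqrtOnePlusConjTransposeMulSelf ξ * sqrtOnePlusConjTransposeMulSelf ξ = 1 + ξᴴ * ξ :=
  psdSqrt_mul_self _

lemma sqrt2_isUnit_det {n₁ n₂ : ℕ} (ξ : Matrix (Fin n₁) (Fin n₂) ℂ) :
    IsUnit (sqrtOnePlusConjTransposeMulSelf ξ).det := by
  have hpd : Matrix.PosDef (1 + ξᴴ * ξ) :=
    Matrix.PosDef.add_posSemidef Matrix.PosDef.one (Matrix.posSemidef_conjTranspose_mul_self ξ)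
  have h := hpd.isUnit
  rw [← sqrt2_mul_self ξ, Matrix.isUnit_iff_isUnit_det, Matrix.det_mul] at h
  exact isUnit_of_mul_isUnit_left h

/-- Under the block-decoupling construction, the lower-right block of `Uᴴ M conj(U)` equals
`(1+ξᴴξ)^{-1/2}(L₂ + ξᴴG + Gᵀconj(ξ) + ξᴴL₁conj(ξ))(1+ξᵀconj(ξ))^{-1/2}`, which also equals
`(1+ξᴴξ)^{1/2}(L₂ + Gᵀconj(ξ))(1+ξᵀconj(ξ))^{-1/2}`. -/
theorem block_decoupling_lower_right_block (n₁ n₂ : ℕ)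
    (L₁ : Matrix (Fin n₁) (Fin n₁) ℂ) (L₂ : Matrix (Fin n₂) (Fin n₂) ℂ)
    (G : Matrix (Fin n₁) (Fin n₂) ℂ) (hL₁ : L₁ᵀ = L₁) (hL₂ : L₂ᵀ = L₂)
    (ξ : Matrix (Fin n₁) (Fin n₂) ℂ)
    (hξ : G + L₁ * ξ.map (starRingEnd ℂ) - ξ * L₂ - ξ * Gᵀ * ξ.map (starRingEnd ℂ) = 0) :
    ((blockUnitary ξ)ᴴ * Matrix.fromBlocks L₁ G Gᵀ L₂
        * (blockUnitary ξ).map (starRingEnd ℂ)).toBlocks₂₂ =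
      (sqrtOnePlusConjTransposeMulSelf ξ)⁻¹
        * (L₂ + ξᴴ * G + Gᵀ * ξ.map (starRingEnd ℂ) + ξᴴ * L₁ * ξ.map (starRingEnd ℂ))
        * ((sqrtOnePlusConjTransposeMulSelf ξ)⁻¹).map (starRingEnd ℂ) ∧
    ((blockUnitary ξ)ᴴ * Matrix.fromBlocks L₁ G Gᵀ L₂
        * (blockUnitary ξ).map (starRingEnd ℂ)).toBlocks₂₂ =
      sqrtOnePlusConjTransposeMulSelf ξ * (L₂ + Gᵀ * ξ.map (starRingEnd ℂ))
        * ((sqrtOnePlusConjTransposeMulSelf ξ)⁻¹).map (starRingEnd ℂ) := by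
  set S := sqrtOnePlusConjTransposeMulSelf ξ with hS
  set c := starRingEnd ℂ
  have hT : (S⁻¹)ᴴ = S⁻¹ := by
    rw [Matrix.conjTranspose_nonsing_inv, sqrt2_hermitian]
  have key : ((blockUnitary ξ)ᴴ * Matrix.fromBlocks L₁ G Gᵀ L₂
        * (blockUnitary ξ).map c).toBlocks₂₂ =
      S⁻¹ * (L₂ + ξᴴ * G + Gᵀ * ξ.map c + ξᴴ * L₁ * ξ.map c) * (S⁻¹).map c := by
    simp only [blockUnitary, ← hS, Matrix.fromBlocks_conjTranspose, Matrix.fromBlocks_map,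
      Matrix.fromBlocks_multiply, Matrix.toBlocks_fromBlocks₂₂, Matrix.conjTranspose_mul,
      Matrix.map_mul, hT]
    simp only [Matrix.mul_add, Matrix.add_mul, Matrix.mul_assoc]
    abel
  refine ⟨key, ?_⟩
  -- second identity
  have h2 : ξᴴ * G + ξᴴ * (L₁ * ξ.map c) - ξᴴ * (ξ * L₂) - ξᴴ * (ξ * (Gᵀ * ξ.map c)) = 0 := by
    have h := congrArg (fun m => ξᴴ * m) hξ
    simpa only [Matrix.mul_add, Matrix.mul_sub, Matrix.mul_zero, Matrix.mul_assoc] using h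
  have h3 : ξᴴ * (L₁ * ξ.map c) =
      ξᴴ * (ξ * L₂) + ξᴴ * (ξ * (Gᵀ * ξ.map c)) - ξᴴ * G := by
    rw [← sub_eq_zero, ← h2]; abel
  have hX : L₂ + ξᴴ * G + Gᵀ * ξ.map c + ξᴴ * L₁ * ξ.map c =
      S * S * ((L₂ + Gᵀ * ξ.map c)) := by
    rw [sqrt2_mul_self]
    simp only [Matrix.add_mul, Matrix.mul_add, Matrix.one_mul, Matrix.mul_assoc, h3]
    abel
  rw [key, hX, ← Matrix.mul_assoc, ← Matrix.mul_assoc, Matrix.nonsing_inv_mul S (sqrt2_isUnit_det ξ),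
    Matrix.one_mul, Matrix.mul_assoc]
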